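/- Let C be an [n,k,d] code with d = d_min^C. Then the PIR rate (min(k, d−1)/n) · (1 − (k/(k+min(k,d−1)))^f)^{-1} is at most the MDS-PIR capacity ((n−k)/n)(1−(k/n)^f)^{-1}, for all f ≥ 1. -/

import Mathlib

/-- `I` is an information set of the `[n,k]` code `C`: it has size `k` and a codeword
vanishing on `I` is zero (so the projection of `C` onto the coordinates in `I` is a
bijection onto `F^I`). -/
def IsInfoSet {F : Type*} [Field F] {n : ℕ} (C : Submodule F (Fin n → F)) (k : ℕ)
    (I : Finset (Fin n)) : Prop :=
  I.card = k ∧ ∀ x ∈ C, (∀ j ∈ I, x j = 0) → x = 0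

/-- `Λ` is a PIR achievable rate matrix for the `[n,k]` code `C`: every column has
Hamming weight `κ` and the support of every row contains an information set. -/
def IsPIRMatrix {F : Type*} [Field F] {n ν : ℕ} (C : Submodule F (Fin n → F))
    (k κ : ℕ) (Λ : Fin ν → Fin n → Bool) : Prop :=
  (∀ j, (Finset.univ.filter fun u => Λ u j = true).card = κ) ∧
  ∀ u, ∃ I : Finset (Fin n), (∀ j ∈ I, Λ u j = true) ∧ IsInfoSet C k I

/-- The `s`-th generalized Hamming weight of the code `C`: the smallest support size of
an `s`-dimensional subcode of `C`. -/
noncomputable def genHammingWeight {F : Type*} [Field F] {n : ℕ}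
    (C : Submodule F (Fin n → F)) (s : ℕ) : ℕ :=
  sInf {c | ∃ D : Submodule F (Fin n → F), D ≤ C ∧ Module.finrank F D = s ∧
    c = Set.ncard {j | ∃ x ∈ D, x j ≠ 0}}

lemma my_geom (x : ℝ) (f : ℕ) : 1 - x^f = (1-x) * ∑ i ∈ Finset.range f, x^i := by
  linear_combination geom_sum_mul x f

lemma sum_ge_one (x : ℝ) (hx : 0 ≤ x) (f : ℕ) (hf : 1 ≤ f) :
    (1:ℝ) ≤ ∑ i ∈ Finset.range f, x ^ i := by
  calc (1:ℝ) = x ^ 0 := by simp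
  _ ≤ _ := Finset.single_le_sum (fun i _ => by positivity) (Finset.mem_range.mpr hf)

lemma rate_mono (x y : ℝ) (f : ℕ) (hf : 1 ≤ f) (hy0 : 0 ≤ y) (hyx : y ≤ x) (hx1 : x < 1) :
    (1-x) * (1-x^f)⁻¹ ≤ (1-y) * (1-y^f)⁻¹ := by
  have hx0 : 0 ≤ x := hy0.trans hyx
  have hSx1 := sum_ge_one x hx0 f hf
  have hSy1 := sum_ge_one y hy0 f hf
  have hSyx : (∑ i ∈ Finset.range f, y ^ i) ≤ ∑ i ∈ Finset.range f, x ^ i :=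
    Finset.sum_le_sum fun i _ => pow_le_pow_left₀ hy0 hyx i
  rw [my_geom x f, my_geom y f, mul_inv, mul_inv, ← mul_assoc, ← mul_assoc,
    mul_inv_cancel₀ (by linarith), mul_inv_cancel₀ (by linarith), one_mul, one_mul]
  exact inv_anti₀ (by linarith) hSyx

lemma aux_rate (k t n : ℝ) (hk : 0 < k) (ht : 0 < t) (hn : k + t ≤ n) (f : ℕ) (hf : 1 ≤ f) :
    (t/n) * (1 - (k/(k+t))^f)⁻¹ ≤ (n - k)/n * (1 - (k/n)^f)⁻¹ := by
  have hn0 : (0:ℝ) < n := by linarith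
  have hkt : (0:ℝ) < k + t := by linarith
  have hx1 : k/(k+t) < 1 := by rw [div_lt_one hkt]; linarith
  have hy0 : 0 ≤ k/n := by positivity
  have hyx : k/n ≤ k/(k+t) := div_le_div_of_nonneg_left hk.le hkt hn
  have key := rate_mono (k/(k+t)) (k/n) f hf hy0 hyx hx1
  have e2 : 1 - k/n = (n-k)/n := by field_simp
  have e1 : 1 - k/(k+t) = t/(k+t) := by field_simp; ring
  rw [e1, e2] at key
  have hfactor : t/n = ((k+t)/n) * (t/(k+t)) := by field_simp
  calc (t/n) * (1 - (k/(k+t))^f)⁻¹ = ((k+t)/n) * ((t/(k+t)) * (1 - (k/(k+t))^f)⁻¹) := by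
        rw [hfactor]; ring
  _ ≤ 1 * ((t/(k+t)) * (1 - (k/(k+t))^f)⁻¹) := by
        have hxf : (k/(k+t))^f ≤ 1 := pow_le_one₀ (by positivity) hx1.le
        apply mul_le_mul_of_nonneg_right _
          (mul_nonneg (by positivity) (inv_nonneg.mpr (by linarith)))
        rw [div_le_one hn0]; linarith
  _ = (t/(k+t)) * (1 - (k/(k+t))^f)⁻¹ := one_mul _
  _ ≤ (n-k)/n * (1 - (k/n)^f)⁻¹ := key

lemma singleton_bound {F : Type*} [Field F] {n k : ℕ} (C : Submodule F (Fin n → F))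
    (hk : Module.finrank F C = k) (hk1 : 1 ≤ k) (hkn : k ≤ n) :
    ∃ x ∈ C, x ≠ 0 ∧ Set.ncard {j | x j ≠ 0} ≤ n - (k - 1) := by
  have hmn : k - 1 < n := by omega
  set m := k - 1 with hm
  let g : Fin m → Fin n := fun i => ⟨i.val, by omega⟩
  let L : C →ₗ[F] (Fin m → F) := (LinearMap.funLeft F F g).comp C.subtype
  have hker : LinearMap.ker L ≠ ⊥ := by
    intro h
    have hinj : Function.Injective L := LinearMap.ker_eq_bot.mp h
    have := LinearMap.finrank_le_finrank_of_injective hinj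
    rw [hk, Module.finrank_pi] at this
    simp only [Fintype.card_fin] at this
    omega
  obtain ⟨x, hxker, hx0⟩ := Submodule.ne_bot_iff _ |>.mp hker
  refine ⟨x.val, x.property, ?_, ?_⟩
  · intro h
    exact hx0 (Subtype.ext h)
  · have hsub : {j : Fin n | x.val j ≠ 0} ⊆ Set.Ici (⟨m, hmn⟩ : Fin n) := by
      intro j hj
      simp only [Set.mem_Ici]
      by_contra hjm
      push_neg at hjm
      have hjm' : j.val < m := hjm
      have : x.val j = 0 := by
        have := congrFun hxker ⟨j.val, hjm'⟩
        simpa [L, g, LinearMap.funLeft] using this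
      exact hj this
    calc Set.ncard {j : Fin n | x.val j ≠ 0} ≤ Set.ncard (Set.Ici (⟨m, hmn⟩ : Fin n)) :=
          Set.ncard_le_ncard hsub (Set.toFinite _)
    _ = n - m := by
        rw [Set.ncard_eq_toFinset_card', Set.toFinset_card, Fintype.card_Ici, Fin.card_Ici]

/-- for an `[n,k,d]` code, the PIR rate
`(min(k,d−1)/n)·(1−(k/(k+min(k,d−1)))^f)⁻¹` is at most the MDS-PIR capacity
`((n−k)/n)·(1−(k/n)^f)⁻¹`, for all `f ≥ 1`. -/
theorem pir_rate_lower_bound_le_capacity {F : Type*} [Field F] {n k d : ℕ}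
    (C : Submodule F (Fin n → F)) (hk : Module.finrank F C = k)
    (hk1 : 1 ≤ k) (hkn : k ≤ n)
    (hd : d = sInf {w | ∃ x ∈ C, x ≠ 0 ∧ w = Set.ncard {j | x j ≠ 0}}) :
    ∀ f : ℕ, 1 ≤ f →
      ((min k (d - 1) : ℝ) / n) *
          (1 - ((k : ℝ) / (k + min k (d - 1))) ^ f)⁻¹ ≤
        ((n : ℝ) - k) / n * (1 - ((k : ℝ) / n) ^ f)⁻¹ := by
  intro f hf
  have hn0 : (0:ℝ) < n := by exact_mod_cast Nat.lt_of_lt_of_le hk1 hkn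
  -- Singleton bound: d ≤ n - k + 1
  obtain ⟨x, hxC, hx0, hw⟩ := singleton_bound C hk hk1 hkn
  have hdle : d ≤ n - (k - 1) := by
    rw [hd]
    exact le_trans (Nat.sInf_le ⟨x, hxC, hx0, rfl⟩) hw
  have hd1 : 1 ≤ d := by
    have hmem : d ∈ {w | ∃ x ∈ C, x ≠ 0 ∧ w = Set.ncard {j | x j ≠ 0}} := by
      rw [hd]; exact Nat.sInf_mem ⟨_, x, hxC, hx0, rfl⟩
    obtain ⟨y, _, hy0, hyw⟩ := hmem
    rw [hyw]
    rw [Nat.one_le_iff_ne_zero]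
    intro hzero
    have hempty := (Set.ncard_eq_zero (Set.toFinite _)).mp hzero
    apply hy0
    funext j
    by_contra hj
    have hjmem : j ∈ {j | y j ≠ 0} := by simpa using hj
    rw [hempty] at hjmem
    exact hjmem
  have hcast : min (k:ℝ) ((d:ℝ) - 1) = ((min k (d-1) : ℕ) : ℝ) := by
    push_cast [hd1]
    rfl
  rw [hcast]
  have htnk : k + min k (d - 1) ≤ n := by clear hd hcast; omega
  rcases Nat.eq_zero_or_pos (min k (d - 1)) with ht0 | htpos
  · -- LHS is zero, RHS is nonnegative
    rw [ht0]
    simp only [Nat.cast_zero, zero_div, zero_mul, add_zero]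
    have hkn' : (k:ℝ)/n ≤ 1 := by
      rw [div_le_one hn0]; exact_mod_cast hkn
    have : ((k:ℝ)/n)^f ≤ 1 := pow_le_one₀ (by positivity) hkn'
    apply mul_nonneg _ (inv_nonneg.mpr (by linarith))
    apply div_nonneg _ hn0.le
    have : (k:ℝ) ≤ n := by exact_mod_cast hkn
    linarith
  · have hmain := aux_rate (k:ℝ) ((min k (d - 1) : ℕ):ℝ) (n:ℝ) (by exact_mod_cast hk1)
      (by exact_mod_cast htpos) (by exact_mod_cast htnk) f hf
    exact_mod_cast hmain
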